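/- arXiv:1312.3314 — 2 statements merged into one kernel-verified Lean document; each statement's English description precedes it below -/
import Mathlib

section
/- For a polynomial p on ℝ^d, the identity p(y)·Γ₀(t,x;s,y) = p(ℳˣ(t,s)) Γ₀(t,x;s,y) holds, where p(ℳˣ(t,s)) denotes the differential operator obtained by substituting the commuting operators ℳᵢˣ(t,s) = xᵢ + 𝔪ᵢ(t,s) + ∑ⱼ𝒞ᵢⱼ(t,s)∂_{xⱼ} for the variables of p. -/
open MeasureTheory Real Matrix

noncomputable section

/-- The `d`-dimensional Gaussian density with mean `x + mv` and covariance matrix `Cv`. -/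
def gauss {d : ℕ} (Cv : Matrix (Fin d) (Fin d) ℝ) (mv : Fin d → ℝ) (x y : Fin d → ℝ) : ℝ :=
  (2 * π) ^ (-(d : ℝ) / 2) * Cv.det ^ (-(1 : ℝ) / 2) *
    Real.exp (-(1 / 2) * (dotProduct (Matrix.mulVec Cv⁻¹ (y - x - mv)) (y - x - mv)))

/-- Partial derivative `∂_{x_i}`. -/
def pd {d : ℕ} (i : Fin d) (f : (Fin d → ℝ) → ℝ) : (Fin d → ℝ) → ℝ :=
  fun x => fderiv ℝ f x (Pi.single i 1)

/-- The `i`-th component `ℳᵢˣ = xᵢ + 𝔪ᵢ + ∑ⱼ 𝒞ᵢⱼ ∂_{xⱼ}` of `ℳˣ = x + 𝔪 + 𝒞∇ₓ`. -/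
def Mop {d : ℕ} (Cv : Matrix (Fin d) (Fin d) ℝ) (mv : Fin d → ℝ) (i : Fin d)
    (f : (Fin d → ℝ) → ℝ) : (Fin d → ℝ) → ℝ :=
  fun x => (x i + mv i) * f x + ∑ j, Cv i j * pd j f x

/-- The operator `p(ℳˣ)` obtained from a polynomial `p` by substituting the
(on `Γ₀` commuting) operators `ℳᵢˣ` for the variables: for each monomial
`c·∏ xᵢ^{kᵢ}` of `p` apply `∏ (ℳᵢˣ)^{kᵢ}` (in a fixed order) and multiply by `c`. -/
def polyOp {d : ℕ} (Cv : Matrix (Fin d) (Fin d) ℝ) (mv : Fin d → ℝ)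
    (p : MvPolynomial (Fin d) ℝ) (f : (Fin d → ℝ) → ℝ) : (Fin d → ℝ) → ℝ :=
  fun x => ∑ k ∈ p.support,
    p.coeff k * ((List.finRange d).foldr (fun i g => (Mop Cv mv i)^[k i] g) f) x

section aux

variable {d : ℕ} (Cv : Matrix (Fin d) (Fin d) ℝ) (mv : Fin d → ℝ) (y : Fin d → ℝ)

/-- The derivative of the Gaussian in `x`. -/
lemma gauss_hasFDerivAt (hCv : Cv.PosDef) (x : Fin d → ℝ) :
    HasFDerivAt (fun x' => gauss Cv mv x' y)
      ((gauss Cv mv x y) •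
        (∑ j, ((Cv⁻¹.mulVec (y - x - mv)) j) •
          (ContinuousLinearMap.proj j : ((Fin d → ℝ) →L[ℝ] ℝ)))) x := by
  set M := Cv⁻¹ with hM
  have hsym : ∀ i j, M i j = M j i := by
    intro i j
    simpa using hCv.1.inv.apply j i
  set A : ℝ := (2 * π) ^ (-(d : ℝ) / 2) * Cv.det ^ (-(1 : ℝ) / 2) with hA
  -- derivative of the affine coordinates
  have hb : ∀ j : Fin d, HasFDerivAt (fun x' : Fin d → ℝ => y j - x' j - mv j)
      (-(ContinuousLinearMap.proj j : ((Fin d → ℝ) →L[ℝ] ℝ))) x := by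
    intro j
    have := ((hasFDerivAt_const (y j) x).fun_sub
      ((ContinuousLinearMap.proj j : ((Fin d → ℝ) →L[ℝ] ℝ)).hasFDerivAt)).fun_sub
      (hasFDerivAt_const (mv j) x)
    simpa only [zero_sub, sub_zero, ContinuousLinearMap.proj_apply] using this
  -- derivative of `aᵢ x' = ∑ j, M i j * (y j - x' j - mv j)`
  have ha : ∀ i : Fin d, HasFDerivAt (fun x' : Fin d → ℝ => ∑ j, M i j * (y j - x' j - mv j))
      (∑ j, M i j • -(ContinuousLinearMap.proj j : ((Fin d → ℝ) →L[ℝ] ℝ))) x :=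
    fun i => HasFDerivAt.fun_sum (fun j _ => (hb j).const_mul (M i j))
  -- derivative of the quadratic form
  have hS : HasFDerivAt
      (fun x' : Fin d → ℝ => ∑ i, (∑ j, M i j * (y j - x' j - mv j)) * (y i - x' i - mv i))
      (∑ i, ((∑ j, M i j * (y j - x j - mv j)) •
          (-(ContinuousLinearMap.proj i : ((Fin d → ℝ) →L[ℝ] ℝ))) +
        (y i - x i - mv i) • (∑ j, M i j • -(ContinuousLinearMap.proj j : ((Fin d → ℝ) →L[ℝ] ℝ)))))
      x := HasFDerivAt.fun_sum (fun i _ => (ha i).mul (hb i))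
  have hφ := hS.const_mul (-(1 / 2) : ℝ)
  have hexp := hφ.exp
  have hfull := hexp.const_mul A
  have heq : (fun x' : Fin d → ℝ => A * Real.exp ((-(1 / 2) : ℝ) *
      ∑ i, (∑ j, M i j * (y j - x' j - mv j)) * (y i - x' i - mv i)))
      = fun x' => gauss Cv mv x' y := rfl
  rw [heq] at hfull
  have hg : gauss Cv mv x y = A * Real.exp ((-(1 / 2) : ℝ) *
      ∑ i, (∑ j, M i j * (y j - x j - mv j)) * (y i - x i - mv i)) := rfl
  suffices hL : ((gauss Cv mv x y) •
        (∑ j, ((M.mulVec (y - x - mv)) j) •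
          (ContinuousLinearMap.proj j : ((Fin d → ℝ) →L[ℝ] ℝ))))
      = A • Real.exp ((-(1 / 2) : ℝ) *
          ∑ i, (∑ j, M i j * (y j - x j - mv j)) * (y i - x i - mv i)) •
        (-(1 / 2) : ℝ) • (∑ i, ((∑ j, M i j * (y j - x j - mv j)) •
          (-(ContinuousLinearMap.proj i : ((Fin d → ℝ) →L[ℝ] ℝ))) +
        (y i - x i - mv i) • (∑ j, M i j • -(ContinuousLinearMap.proj j : ((Fin d → ℝ) →L[ℝ] ℝ))))) by
    rw [hL]; exact hfull
  rw [hg, mul_smul]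
  congr 2
  ext h
  simp only [ContinuousLinearMap.coe_smul', Pi.smul_apply, ContinuousLinearMap.coe_sum',
    Finset.sum_apply, ContinuousLinearMap.coe_smul, ContinuousLinearMap.proj_apply,
    ContinuousLinearMap.add_apply, ContinuousLinearMap.neg_apply, ContinuousLinearMap.coe_neg',
    Pi.neg_apply, smul_eq_mul, Matrix.mulVec, dotProduct, Pi.sub_apply]
  have step : ∀ i : Fin d,
      (∑ j, M i j * (y j - x j - mv j)) * -(h i) +
        (y i - x i - mv i) * ∑ j, M i j * -(h j)
      = -((∑ j, M i j * (y j - x j - mv j)) * h i +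
          (y i - x i - mv i) * ∑ j, M i j * h j) := by
    intro i
    simp only [mul_neg, Finset.sum_neg_distrib]
    ring
  rw [Finset.sum_congr rfl (fun i _ => step i), Finset.sum_neg_distrib,
    Finset.sum_add_distrib]
  have key : ∑ i, (y i - x i - mv i) * ∑ j, M i j * h j
      = ∑ j, (∑ i, M j i * (y i - x i - mv i)) * h j := by
    simp_rw [Finset.mul_sum, Finset.sum_mul]
    rw [Finset.sum_comm]
    refine Finset.sum_congr rfl fun j _ => Finset.sum_congr rfl fun i _ => ?_
    rw [hsym j i]
    ring
  rw [key]
  ring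

lemma gauss_differentiableAt (hCv : Cv.PosDef) (x : Fin d → ℝ) :
    DifferentiableAt ℝ (fun x' => gauss Cv mv x' y) x :=
  (gauss_hasFDerivAt Cv mv y hCv x).differentiableAt

lemma pd_gauss (hCv : Cv.PosDef) (j : Fin d) (x : Fin d → ℝ) :
    pd j (fun x' => gauss Cv mv x' y) x
      = (Cv⁻¹.mulVec (y - x - mv)) j * gauss Cv mv x y := by
  unfold pd
  rw [(gauss_hasFDerivAt Cv mv y hCv x).fderiv]
  simp only [ContinuousLinearMap.coe_smul', Pi.smul_apply, ContinuousLinearMap.coe_sum',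
    Finset.sum_apply, ContinuousLinearMap.coe_smul, ContinuousLinearMap.proj_apply,
    smul_eq_mul, Pi.single_apply]
  rw [Finset.sum_congr rfl (fun j' _ => by rw [mul_ite, mul_one, mul_zero]),
    Finset.sum_ite_eq' Finset.univ j]
  simp [mul_comm]

lemma Mop_const_mul_gauss (hCv : Cv.PosDef) (c : ℝ) (i : Fin d) :
    Mop Cv mv i (fun x' => c * gauss Cv mv x' y)
      = fun x' => (c * y i) * gauss Cv mv x' y := by
  funext x
  unfold Mop
  have hpd : ∀ j, pd j (fun x' => c * gauss Cv mv x' y) x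
      = c * pd j (fun x' => gauss Cv mv x' y) x := by
    intro j
    unfold pd
    rw [fderiv_const_mul (gauss_differentiableAt Cv mv y hCv x)]
    simp
  simp only [hpd, pd_gauss Cv mv y hCv]
  have hinv : ∑ j, Cv i j * ((Cv⁻¹.mulVec (y - x - mv)) j) = y i - x i - mv i := by
    have h1 : Cv.mulVec (Cv⁻¹.mulVec (y - x - mv)) = y - x - mv := by
      rw [Matrix.mulVec_mulVec,
        Matrix.mul_nonsing_inv _ (isUnit_iff_ne_zero.2 hCv.det_pos.ne'), Matrix.one_mulVec]
    have := congrFun h1 i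
    simpa [Matrix.mulVec, dotProduct] using this
  have expand : ∑ j, Cv i j * (c * ((Cv⁻¹.mulVec (y - x - mv)) j * gauss Cv mv x y))
      = c * gauss Cv mv x y * ∑ j, Cv i j * (Cv⁻¹.mulVec (y - x - mv)) j := by
    rw [Finset.mul_sum]
    exact Finset.sum_congr rfl fun j _ => by ring
  rw [expand, hinv]
  ring

lemma Mop_iter_gauss (hCv : Cv.PosDef) (c : ℝ) (i : Fin d) (n : ℕ) :
    (Mop Cv mv i)^[n] (fun x' => c * gauss Cv mv x' y)
      = fun x' => (c * y i ^ n) * gauss Cv mv x' y := by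
  induction n with
  | zero => simp
  | succ n ih =>
    rw [Function.iterate_succ_apply', ih, Mop_const_mul_gauss Cv mv y hCv]
    funext x'
    ring

lemma foldr_Mop_gauss (hCv : Cv.PosDef) (k : Fin d →₀ ℕ) :
    ∀ (l : List (Fin d)) (c : ℝ),
      l.foldr (fun i g => (Mop Cv mv i)^[k i] g) (fun x' => c * gauss Cv mv x' y)
        = fun x' => (c * (l.map fun i => y i ^ (k i)).prod) * gauss Cv mv x' y := by
  intro l
  induction l with
  | nil => intro c; simp
  | cons i l ih =>
    intro c
    simp only [List.foldr_cons, ih c, List.map_cons, List.prod_cons]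
    rw [Mop_iter_gauss Cv mv y hCv]
    funext x'
    ring

end aux

/-- for a polynomial `p` on `ℝ^d`, `p(y)·Γ₀(t,x;s,y) = p(ℳˣ(t,s))Γ₀(t,x;s,y)`. -/
theorem poly_mul_gauss_eq_polyOp {d : ℕ} (t s : ℝ) (hts : t < s)
    (Cv : Matrix (Fin d) (Fin d) ℝ) (hCv : Cv.PosDef) (mv : Fin d → ℝ)
    (p : MvPolynomial (Fin d) ℝ) (x y : Fin d → ℝ) :
    MvPolynomial.eval y p * gauss Cv mv x y =
      polyOp Cv mv p (fun x' => gauss Cv mv x' y) x := by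
  unfold polyOp
  have hg : (fun x' => gauss Cv mv x' y) = fun x' => (1 : ℝ) * gauss Cv mv x' y := by
    funext x'
    ring
  rw [hg]
  have hfold : ∀ k : Fin d →₀ ℕ,
      (List.finRange d).foldr (fun i g => (Mop Cv mv i)^[k i] g)
        (fun x' => (1 : ℝ) * gauss Cv mv x' y) x
      = (∏ i, y i ^ k i) * gauss Cv mv x y := by
    intro k
    rw [foldr_Mop_gauss Cv mv y hCv k, Fin.prod_univ_def]
    ring
  simp only [hfold]
  rw [MvPolynomial.eval_eq', Finset.sum_mul]
  exact Finset.sum_congr rfl fun k _ => by ring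
end
end

section
/- Let 𝒜ⁿ be a differential operator with polynomial coefficients, 𝒜ⁿ_ξ = ∑_{|α|≤2} a_{α,n}(s,ξ) D^α_ξ where each a_{α,n}(s,·) is a polynomial. Then for t < s, x ∈ ℝ^d and any f ∈ C²_0(ℝ^d): ∫_{ℝ^d} Γ₀(t,x;s,ξ) 𝒜ⁿ_ξ f(ξ) dξ = 𝒢ˣₙ(t,s) ∫_{ℝ^d} Γ₀(t,x;s,ξ) f(ξ) dξ, where 𝒢ˣₙ(t,s) = ∑_{|α|≤2} a_{α,n}(s, ℳˣ(t,s)) D^α_x and ℳˣ(t,s) = x + 𝔪(t,s) + 𝒞(t,s)∇ₓ. -/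
open MeasureTheory Real Matrix

noncomputable section

/-- The second order operator `𝒜ⁿ = ∑_{|α|≤2} a_{α,n}(s,ξ)D^α_ξ` with polynomial
coefficients, written as `a₀(ξ)f + ∑ᵢ a₁ᵢ(ξ)∂ᵢf + ∑ᵢⱼ a₂ᵢⱼ(ξ)∂ᵢ∂ⱼf`. -/
def Aop {d : ℕ} (a₀ : MvPolynomial (Fin d) ℝ) (a₁ : Fin d → MvPolynomial (Fin d) ℝ)
    (a₂ : Fin d → Fin d → MvPolynomial (Fin d) ℝ) (f : (Fin d → ℝ) → ℝ) :
    (Fin d → ℝ) → ℝ :=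
  fun ξ => MvPolynomial.eval ξ a₀ * f ξ + (∑ i, MvPolynomial.eval ξ (a₁ i) * pd i f ξ) +
    ∑ i, ∑ j, MvPolynomial.eval ξ (a₂ i j) * pd i (pd j f) ξ

/-- The operator `𝒢ˣₙ(t,s) = ∑_{|α|≤2} a_{α,n}(s,ℳˣ(t,s)) D^α_x`. -/
def Gop {d : ℕ} (Cv : Matrix (Fin d) (Fin d) ℝ) (mv : Fin d → ℝ)
    (a₀ : MvPolynomial (Fin d) ℝ) (a₁ : Fin d → MvPolynomial (Fin d) ℝ)
    (a₂ : Fin d → Fin d → MvPolynomial (Fin d) ℝ) (f : (Fin d → ℝ) → ℝ) :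
    (Fin d → ℝ) → ℝ :=
  fun x => polyOp Cv mv a₀ f x + (∑ i, polyOp Cv mv (a₁ i) (pd i f) x) +
    ∑ i, ∑ j, polyOp Cv mv (a₂ i j) (pd i (pd j f)) x


variable {d : ℕ}

/-- The continuous linear functional `v ↦ ∑ j, w j * v j`. -/
def dlin (w : Fin d → ℝ) : (Fin d → ℝ) →L[ℝ] ℝ := ∑ j, w j • ContinuousLinearMap.proj j

lemma dlin_apply (w v : Fin d → ℝ) : dlin w v = ∑ j, w j * v j := by
  simp [dlin, ContinuousLinearMap.sum_apply]

lemma dlin_single (w : Fin d → ℝ) (k : Fin d) : dlin w (Pi.single k 1) = w k := by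
  simp [dlin_apply, Pi.single_apply]

lemma continuous_dlin : Continuous fun w : Fin d → ℝ => dlin w := by
  unfold dlin
  exact continuous_finset_sum _ fun j _ => (continuous_apply j).smul continuous_const

/-- Gaussian-type kernel. -/
def kap (A : Matrix (Fin d) (Fin d) ℝ) (c : ℝ) (u : Fin d → ℝ) : ℝ :=
  c * Real.exp (-(1/2) * dotProduct (A.mulVec u) u)

lemma continuous_quad (A : Matrix (Fin d) (Fin d) ℝ) :
    Continuous fun u : Fin d → ℝ => dotProduct (A.mulVec u) u := by
  simp only [dotProduct, Matrix.mulVec]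
  exact continuous_finset_sum _ fun i _ =>
    (continuous_finset_sum _ fun j _ => continuous_const.mul (continuous_apply j)).mul
      (continuous_apply i)

lemma continuous_mulVec (A : Matrix (Fin d) (Fin d) ℝ) :
    Continuous fun w : Fin d → ℝ => A.mulVec w := by
  refine continuous_pi fun i => ?_
  simp only [Matrix.mulVec, dotProduct]
  exact continuous_finset_sum _ fun j _ => continuous_const.mul (continuous_apply j)

lemma continuous_kap (A : Matrix (Fin d) (Fin d) ℝ) (c : ℝ) : Continuous (kap A c) :=
  continuous_const.mul (Real.continuous_exp.comp (continuous_const.mul (continuous_quad A)))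

lemma hasFDerivAt_kap (A : Matrix (Fin d) (Fin d) ℝ) (hA : Aᵀ = A) (c : ℝ) (u : Fin d → ℝ) :
    HasFDerivAt (kap A c) ((-(kap A c u)) • dlin (A.mulVec u)) u := by
  have h1 : ∀ i : Fin d, HasFDerivAt (fun v : Fin d → ℝ => A.mulVec v i) (dlin (A i)) u := by
    intro i
    have : (fun v : Fin d → ℝ => A.mulVec v i) = fun v => dlin (A i) v := by
      funext v; simp [dlin_apply, Matrix.mulVec, dotProduct]
    rw [this]
    exact (dlin (A i)).hasFDerivAt
  have h2 : HasFDerivAt (fun v : Fin d → ℝ => dotProduct (A.mulVec v) v)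
      (∑ i, ((A.mulVec u i) • ContinuousLinearMap.proj i + u i • dlin (A i))) u := by
    have := HasFDerivAt.fun_sum (fun i (_ : i ∈ Finset.univ) =>
      ((h1 i).mul ((ContinuousLinearMap.proj i : (Fin d → ℝ) →L[ℝ] ℝ).hasFDerivAt)))
    simpa [dotProduct, add_comm] using this
  have hsym : ∀ i j, A i j = A j i := by
    intro i j; simpa using congrFun (congrFun hA j) i
  have hD : (∑ i, ((A.mulVec u i) • ContinuousLinearMap.proj i + u i • dlin (A i))
      : (Fin d → ℝ) →L[ℝ] ℝ) = (2:ℝ) • dlin (A.mulVec u) := by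
    apply ContinuousLinearMap.ext; intro v
    simp only [ContinuousLinearMap.sum_apply, ContinuousLinearMap.add_apply,
      ContinuousLinearMap.smul_apply, ContinuousLinearMap.proj_apply, dlin_apply, smul_eq_mul]
    have key : ∑ i, u i * ∑ j, A i j * v j = ∑ j, A.mulVec u j * v j := by
      calc ∑ i, u i * ∑ j, A i j * v j = ∑ i, ∑ j, A j i * u i * v j := by
            refine Finset.sum_congr rfl fun i _ => ?_
            rw [Finset.mul_sum]
            exact Finset.sum_congr rfl fun j _ => by rw [hsym i j]; ring
        _ = ∑ j, ∑ i, A j i * u i * v j := Finset.sum_comm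
        _ = ∑ j, A.mulVec u j * v j := by
            refine Finset.sum_congr rfl fun j _ => ?_
            simp only [Matrix.mulVec, dotProduct, Finset.sum_mul]
    rw [Finset.sum_add_distrib, key, ← Finset.sum_add_distrib]
    rw [Finset.mul_sum]
    exact Finset.sum_congr rfl fun i _ => by ring
  rw [hD] at h2
  have h3 : HasFDerivAt (fun v : Fin d → ℝ => -(1/2) * dotProduct (A.mulVec v) v)
      ((-(1/2) : ℝ) • ((2:ℝ) • dlin (A.mulVec u))) u := h2.const_mul _
  have h4 := (h3.exp).const_mul c
  refine h4.congr_fderiv ?_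
  apply ContinuousLinearMap.ext; intro v
  simp only [ContinuousLinearMap.smul_apply, smul_eq_mul, kap]
  ring

variable (Cv : Matrix (Fin d) (Fin d) ℝ) (mv : Fin d → ℝ)

lemma gauss_eq_kap (x ξ : Fin d → ℝ) :
    gauss Cv mv x ξ =
      kap Cv⁻¹ ((2 * π) ^ (-(d : ℝ) / 2) * Cv.det ^ (-(1 : ℝ) / 2)) (ξ - x - mv) := rfl

lemma inv_transpose (hCv : Cv.PosDef) : (Cv⁻¹)ᵀ = Cv⁻¹ := by
  rw [Matrix.transpose_nonsing_inv]
  congr 1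
  simpa using hCv.isHermitian.eq

lemma mulVec_inv_cancel (hCv : Cv.PosDef) (u : Fin d → ℝ) :
    Cv.mulVec (Cv⁻¹.mulVec u) = u := by
  rw [Matrix.mulVec_mulVec, Matrix.mul_nonsing_inv _ (isUnit_iff_ne_zero.mpr hCv.det_pos.ne'),
    Matrix.one_mulVec]

lemma hasFDerivAt_gauss_x (hCv : Cv.PosDef) (ξ x : Fin d → ℝ) :
    HasFDerivAt (fun x' => gauss Cv mv x' ξ)
      ((gauss Cv mv x ξ) • dlin (Cv⁻¹.mulVec (ξ - x - mv))) x := by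
  have hi : HasFDerivAt (fun x' : Fin d → ℝ => ξ - x' - mv)
      (-(ContinuousLinearMap.id ℝ (Fin d → ℝ))) x := by
    simpa using ((hasFDerivAt_id (𝕜 := ℝ) x).const_sub ξ).sub_const mv
  have h := (hasFDerivAt_kap Cv⁻¹ (inv_transpose Cv hCv)
      ((2 * π) ^ (-(d : ℝ) / 2) * Cv.det ^ (-(1 : ℝ) / 2)) (ξ - x - mv)).comp x hi
  simp only [gauss_eq_kap]
  refine h.congr_fderiv ?_
  apply ContinuousLinearMap.ext; intro v
  simp [ContinuousLinearMap.comp_apply, ContinuousLinearMap.smul_apply, dlin]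

lemma continuous_gauss_prod :
    Continuous fun p : (Fin d → ℝ) × (Fin d → ℝ) => gauss Cv mv p.1 p.2 := by
  simp only [gauss_eq_kap]
  exact (continuous_kap _ _).comp ((continuous_snd.sub continuous_fst).sub continuous_const)

lemma continuous_gauss (x : Fin d → ℝ) : Continuous fun ξ => gauss Cv mv x ξ := by
  simp only [gauss_eq_kap]
  exact (continuous_kap _ _).comp ((continuous_id.sub continuous_const).sub continuous_const)

lemma hasFDerivAt_integral_param
    (Φ : (Fin d → ℝ) → (Fin d → ℝ) → ℝ)
    (Φ' : (Fin d → ℝ) → (Fin d → ℝ) → (Fin d → ℝ) →L[ℝ] ℝ)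
    (x₀ : Fin d → ℝ) (K : Set (Fin d → ℝ)) (hK : IsCompact K)
    (hΦc : Continuous fun p : (Fin d → ℝ) × (Fin d → ℝ) => Φ p.1 p.2)
    (hΦ'c : Continuous fun p : (Fin d → ℝ) × (Fin d → ℝ) => Φ' p.1 p.2)
    (hdiff : ∀ ξ x, HasFDerivAt (fun x' => Φ x' ξ) (Φ' x ξ) x)
    (hsupp : ∀ x ∈ Metric.closedBall x₀ 1, ∀ ξ, ξ ∉ K → Φ x ξ = 0)
    (hsupp' : ∀ x ∈ Metric.closedBall x₀ 1, ∀ ξ, ξ ∉ K → Φ' x ξ = 0) :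
    HasFDerivAt (fun x => ∫ ξ, Φ x ξ) (∫ ξ, Φ' x₀ ξ) x₀ := by
  obtain ⟨M, hM⟩ := (IsCompact.prod (isCompact_closedBall x₀ 1) hK).exists_bound_of_continuousOn
    hΦ'c.continuousOn
  have hx₀cb : x₀ ∈ Metric.closedBall x₀ 1 := Metric.mem_closedBall_self zero_le_one
  apply hasFDerivAt_integral_of_dominated_of_fderiv_le (s := Metric.ball x₀ 1)
    (bound := K.indicator fun _ => max M 0) (Metric.ball_mem_nhds x₀ one_pos)
  · exact Filter.Eventually.of_forall fun x =>
      (hΦc.comp (continuous_const.prodMk continuous_id)).aestronglyMeasurable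
  · refine (hΦc.comp (continuous_const.prodMk continuous_id)).integrable_of_hasCompactSupport
      (HasCompactSupport.intro hK fun ξ hξ => hsupp x₀ hx₀cb ξ hξ)
  · exact (hΦ'c.comp (continuous_const.prodMk continuous_id)).aestronglyMeasurable
  · refine Filter.Eventually.of_forall fun ξ x hx => ?_
    by_cases hξ : ξ ∈ K
    · rw [Set.indicator_of_mem hξ]
      exact le_trans (hM (x, ξ) ⟨Metric.ball_subset_closedBall hx, hξ⟩) (le_max_left _ _)
    · rw [Set.indicator_of_notMem hξ, hsupp' x (Metric.ball_subset_closedBall hx) ξ hξ]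
      simp
  · rw [integrable_indicator_iff hK.measurableSet]
    exact integrableOn_const hK.measure_lt_top.ne
  · exact Filter.Eventually.of_forall fun ξ x _ => hdiff ξ x

/-- The basic integral operator. -/
def Fint (Cv : Matrix (Fin d) (Fin d) ℝ) (mv : Fin d → ℝ) (g : (Fin d → ℝ) → ℝ) :
    (Fin d → ℝ) → ℝ :=
  fun x => ∫ ξ, gauss Cv mv x ξ * g ξ

lemma integrable_gauss_mul (h : (Fin d → ℝ) → ℝ) (hh : Continuous h)
    (hhc : HasCompactSupport h) (x : Fin d → ℝ) :
    Integrable fun ξ => gauss Cv mv x ξ * h ξ :=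
  ((continuous_gauss Cv mv x).mul hh).integrable_of_hasCompactSupport hhc.mul_left

lemma hasFDerivAt_Fint (hCv : Cv.PosDef) (g : (Fin d → ℝ) → ℝ) (hg : Continuous g)
    (hgc : HasCompactSupport g) (x₀ : Fin d → ℝ) :
    HasFDerivAt (Fint Cv mv g)
      (∫ ξ, g ξ • ((gauss Cv mv x₀ ξ) • dlin (Cv⁻¹.mulVec (ξ - x₀ - mv)))) x₀ := by
  apply hasFDerivAt_integral_param _
    (fun x ξ => g ξ • ((gauss Cv mv x ξ) • dlin (Cv⁻¹.mulVec (ξ - x - mv))))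
    x₀ (tsupport g) hgc
  · exact (continuous_gauss_prod Cv mv).mul (hg.comp continuous_snd)
  · exact ((hg.comp continuous_snd).smul ((continuous_gauss_prod Cv mv).smul
      (continuous_dlin.comp ((continuous_mulVec Cv⁻¹).comp
        ((continuous_snd.sub continuous_fst).sub continuous_const)))))
  · intro ξ x
    simpa [smul_smul, mul_comm] using (hasFDerivAt_gauss_x Cv mv hCv ξ x).mul_const (g ξ)
  · intro x _ ξ hξ
    rw [image_eq_zero_of_notMem_tsupport hξ, mul_zero]
  · intro x _ ξ hξ
    rw [image_eq_zero_of_notMem_tsupport hξ, zero_smul]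

lemma pd_Fint (hCv : Cv.PosDef) (g : (Fin d → ℝ) → ℝ) (hg : Continuous g)
    (hgc : HasCompactSupport g) (k : Fin d) (x : Fin d → ℝ) :
    pd k (Fint Cv mv g) x
      = ∫ ξ, gauss Cv mv x ξ * ((Cv⁻¹.mulVec (ξ - x - mv)) k * g ξ) := by
  have h := hasFDerivAt_Fint Cv mv hCv g hg hgc x
  have hint : Integrable fun ξ =>
      g ξ • ((gauss Cv mv x ξ) • dlin (Cv⁻¹.mulVec (ξ - x - mv))) := by
    apply Continuous.integrable_of_hasCompactSupport
    · exact (hg.smul ((continuous_gauss Cv mv x).smul (continuous_dlin.comp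
        ((continuous_mulVec Cv⁻¹).comp ((continuous_id.sub continuous_const).sub
          continuous_const)))))
    · apply HasCompactSupport.intro hgc
      intro ξ hξ
      rw [image_eq_zero_of_notMem_tsupport hξ, zero_smul]
  rw [pd, h.fderiv, ContinuousLinearMap.integral_apply hint]
  congr 1; funext ξ
  simp only [ContinuousLinearMap.smul_apply, dlin_single, smul_eq_mul]
  ring



variable {d : ℕ} (Cv : Matrix (Fin d) (Fin d) ℝ) (mv : Fin d → ℝ)

lemma Mop_Fint (hCv : Cv.PosDef) (i : Fin d) (g : (Fin d → ℝ) → ℝ) (hg : Continuous g)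
    (hgc : HasCompactSupport g) :
    Mop Cv mv i (Fint Cv mv g) = Fint Cv mv fun ξ => ξ i * g ξ := by
  funext x
  have hAc : Continuous fun ξ : Fin d → ℝ => Cv⁻¹.mulVec (ξ - x - mv) :=
    (continuous_mulVec Cv⁻¹).comp ((continuous_id.sub continuous_const).sub continuous_const)
  have hint1 : Integrable fun ξ => gauss Cv mv x ξ * g ξ := integrable_gauss_mul Cv mv g hg hgc x
  have hint2 : ∀ j, Integrable fun ξ =>
      gauss Cv mv x ξ * ((Cv⁻¹.mulVec (ξ - x - mv)) j * g ξ) := fun j =>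
    integrable_gauss_mul Cv mv _ (((continuous_apply j).comp hAc).mul hg) hgc.mul_left x
  have key : ∀ ξ, (x i + mv i) * (gauss Cv mv x ξ * g ξ)
      + ∑ j, Cv i j * (gauss Cv mv x ξ * ((Cv⁻¹.mulVec (ξ - x - mv)) j * g ξ))
      = gauss Cv mv x ξ * (ξ i * g ξ) := by
    intro ξ
    have h1 : ∑ j, Cv i j * (gauss Cv mv x ξ * ((Cv⁻¹.mulVec (ξ - x - mv)) j * g ξ))
        = (∑ j, Cv i j * (Cv⁻¹.mulVec (ξ - x - mv)) j) * (gauss Cv mv x ξ * g ξ) := by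
      rw [Finset.sum_mul]; exact Finset.sum_congr rfl fun j _ => by ring
    have h2 : ∑ j, Cv i j * (Cv⁻¹.mulVec (ξ - x - mv)) j = ξ i - x i - mv i := by
      have h := congrFun (mulVec_inv_cancel Cv hCv (ξ - x - mv)) i
      simp only [Matrix.mulVec, dotProduct] at h
      simpa [Matrix.mulVec, dotProduct] using h
    rw [h1, h2]; ring
  show (x i + mv i) * Fint Cv mv g x + ∑ j, Cv i j * pd j (Fint Cv mv g) x = _
  have hpd : ∀ j, pd j (Fint Cv mv g) x
      = ∫ ξ, gauss Cv mv x ξ * ((Cv⁻¹.mulVec (ξ - x - mv)) j * g ξ) := fun j =>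
    pd_Fint Cv mv hCv g hg hgc j x
  simp only [hpd]
  have hs : ∑ j, Cv i j * ∫ ξ, gauss Cv mv x ξ * ((Cv⁻¹.mulVec (ξ - x - mv)) j * g ξ)
      = ∫ ξ, ∑ j, Cv i j * (gauss Cv mv x ξ * ((Cv⁻¹.mulVec (ξ - x - mv)) j * g ξ)) := by
    calc ∑ j, Cv i j * ∫ ξ, gauss Cv mv x ξ * ((Cv⁻¹.mulVec (ξ - x - mv)) j * g ξ)
        = ∑ j, ∫ ξ, Cv i j * (gauss Cv mv x ξ * ((Cv⁻¹.mulVec (ξ - x - mv)) j * g ξ)) :=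
          Finset.sum_congr rfl fun j _ => (integral_const_mul _ _).symm
      _ = _ := (integral_finset_sum _ fun j _ => (hint2 j).const_mul _).symm
  rw [hs]
  have hFg : (x i + mv i) * Fint Cv mv g x
      = ∫ ξ, (x i + mv i) * (gauss Cv mv x ξ * g ξ) := (integral_const_mul _ _).symm
  rw [hFg, ← integral_add (hint1.const_mul _)
    (integrable_finset_sum _ fun j _ => (hint2 j).const_mul _)]
  show _ = ∫ ξ, gauss Cv mv x ξ * (ξ i * g ξ)
  congr 1; funext ξ; exact key ξ

lemma iter_Mop_Fint (hCv : Cv.PosDef) (i : Fin d) (k : ℕ) (g : (Fin d → ℝ) → ℝ)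
    (hg : Continuous g) (hgc : HasCompactSupport g) :
    (Mop Cv mv i)^[k] (Fint Cv mv g) = Fint Cv mv fun ξ => ξ i ^ k * g ξ := by
  induction k with
  | zero =>
    simp only [Function.iterate_zero, id_eq, pow_zero, one_mul]
  | succ k ih =>
    rw [Function.iterate_succ_apply', ih,
      Mop_Fint Cv mv hCv i (fun ξ => ξ i ^ k * g ξ) (((continuous_apply i).pow k).mul hg) hgc.mul_left]
    have : (fun ξ : Fin d → ℝ => ξ i * (ξ i ^ k * g ξ)) = fun ξ => ξ i ^ (k + 1) * g ξ := by
      funext ξ; rw [pow_succ]; ring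
    rw [this]

lemma gaussAux_continuous_list_prod (kk : Fin d →₀ ℕ) (l : List (Fin d)) :
    Continuous fun ξ : Fin d → ℝ => (l.map fun i => ξ i ^ kk i).prod := by
  induction l with
  | nil => simpa using continuous_const
  | cons a t iht =>
    simp only [List.map_cons, List.prod_cons]
    exact ((continuous_apply a).pow _).mul iht

lemma foldr_Fint (hCv : Cv.PosDef) (kk : Fin d →₀ ℕ) (l : List (Fin d))
    (g : (Fin d → ℝ) → ℝ) (hg : Continuous g) (hgc : HasCompactSupport g) :
    l.foldr (fun i h => (Mop Cv mv i)^[kk i] h) (Fint Cv mv g)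
      = Fint Cv mv fun ξ => (l.map fun i => ξ i ^ kk i).prod * g ξ := by
  induction l with
  | nil => simp only [List.foldr_nil, List.map_nil, List.prod_nil, one_mul]
  | cons i l ih =>
    rw [List.foldr_cons, ih, iter_Mop_Fint Cv mv hCv i _ (fun ξ => (l.map fun i => ξ i ^ kk i).prod * g ξ)
      ((gaussAux_continuous_list_prod kk l).mul hg) hgc.mul_left]
    have : (fun ξ : Fin d → ℝ => ξ i ^ kk i * ((l.map fun i => ξ i ^ kk i).prod * g ξ))
        = fun ξ => ((List.map (fun i => ξ i ^ kk i) (i :: l)).prod * g ξ) := by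
      funext ξ
      simp only [List.map_cons, List.prod_cons]; ring
    rw [this]

lemma polyOp_Fint (hCv : Cv.PosDef) (p : MvPolynomial (Fin d) ℝ) (g : (Fin d → ℝ) → ℝ)
    (hg : Continuous g) (hgc : HasCompactSupport g) (x : Fin d → ℝ) :
    polyOp Cv mv p (Fint Cv mv g) x
      = ∫ ξ, gauss Cv mv x ξ * (MvPolynomial.eval ξ p * g ξ) := by
  have hmono : ∀ k : Fin d →₀ ℕ, Continuous fun ξ : Fin d → ℝ => ∏ i, ξ i ^ k i :=
    fun k => continuous_finset_prod _ fun i _ => (continuous_apply i).pow _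
  show (∑ k ∈ p.support, p.coeff k
      * ((List.finRange d).foldr (fun i h => (Mop Cv mv i)^[k i] h) (Fint Cv mv g)) x) = _
  have hstep : ∀ k ∈ p.support, p.coeff k
      * ((List.finRange d).foldr (fun i h => (Mop Cv mv i)^[k i] h) (Fint Cv mv g)) x
      = ∫ ξ, p.coeff k * (gauss Cv mv x ξ * ((∏ i, ξ i ^ k i) * g ξ)) := by
    intro k _
    rw [foldr_Fint Cv mv hCv k _ g hg hgc]
    have hl : ∀ ξ : Fin d → ℝ, ((List.finRange d).map fun i => ξ i ^ k i).prod
        = ∏ i, ξ i ^ k i := by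
      intro ξ; rw [← Fin.prod_univ_def]
    show p.coeff k * ∫ ξ, gauss Cv mv x ξ
      * (((List.finRange d).map fun i => ξ i ^ k i).prod * g ξ) = _
    simp only [hl]
    rw [← integral_const_mul]
  rw [Finset.sum_congr rfl hstep, ← integral_finset_sum _ fun k _ =>
    ((integrable_gauss_mul Cv mv (fun ξ => (∏ i, ξ i ^ k i) * g ξ) ((hmono k).mul hg) hgc.mul_left x).const_mul _)]
  congr 1; funext ξ
  rw [MvPolynomial.eval_eq']
  rw [Finset.sum_mul, Finset.mul_sum]
  exact Finset.sum_congr rfl fun k _ => by ring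


open Pointwise

variable {d : ℕ} (Cv : Matrix (Fin d) (Fin d) ℝ) (mv : Fin d → ℝ)

lemma hasCompactSupport_pd (f : (Fin d → ℝ) → ℝ) (hfc : HasCompactSupport f) (i : Fin d) :
    HasCompactSupport (pd i f) :=
  hfc.fderiv_apply ℝ (Pi.single i 1)

lemma continuous_pd {f : (Fin d → ℝ) → ℝ} (hf : ContDiff ℝ 1 f) (i : Fin d) :
    Continuous (pd i f) :=
  (hf.continuous_fderiv one_ne_zero).clm_apply continuous_const

lemma contDiff_pd {f : (Fin d → ℝ) → ℝ} (hf : ContDiff ℝ 2 f) (i : Fin d) :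
    ContDiff ℝ 1 (pd i f) :=
  (hf.fderiv_right (by norm_num)).clm_apply contDiff_const

lemma Fint_shift (g : (Fin d → ℝ) → ℝ) (x : Fin d → ℝ) :
    Fint Cv mv g x = ∫ u, gauss Cv mv 0 u * g (x + u) := by
  rw [Fint, ← integral_add_left_eq_self (fun ξ => gauss Cv mv x ξ * g ξ) x]
  congr 1; funext u
  have : gauss Cv mv x (x + u) = gauss Cv mv 0 u := by
    simp only [gauss_eq_kap]
    congr 1
    abel
  rw [this]

set_option maxHeartbeats 1000000 in
lemma pd_Fint_eq (g : (Fin d → ℝ) → ℝ) (hg : ContDiff ℝ 1 g) (hgc : HasCompactSupport g)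
    (i : Fin d) : pd i (Fint Cv mv g) = Fint Cv mv (pd i g) := by
  funext x₀
  have hrep : ∀ h : (Fin d → ℝ) → ℝ, Fint Cv mv h = fun x => ∫ u, gauss Cv mv 0 u * h (x + u) :=
    fun h => funext fun x => Fint_shift Cv mv h x
  have hg' : ∀ y, HasFDerivAt g (fderiv ℝ g y) y :=
    fun y => (hg.differentiable one_ne_zero y).hasFDerivAt
  have hK : IsCompact (tsupport g + -(Metric.closedBall x₀ 1)) :=
    IsCompact.add hgc (isCompact_closedBall x₀ 1).neg
  have hmem : ∀ x ∈ Metric.closedBall x₀ 1, ∀ u : Fin d → ℝ,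
      x + u ∈ tsupport g → u ∈ tsupport g + -(Metric.closedBall x₀ 1) := by
    intro x hx u hu
    have : u = (x + u) + -x := by abel
    rw [this]
    exact Set.add_mem_add hu (Set.neg_mem_neg.mpr hx)
  have hdg : ∀ u x : Fin d → ℝ, HasFDerivAt (fun x' => g (x' + u)) (fderiv ℝ g (x + u)) x := by
    intro u x
    have h2 : HasFDerivAt (fun x' : Fin d → ℝ => x' + u) (ContinuousLinearMap.id ℝ _) x :=
      (hasFDerivAt_id (𝕜 := ℝ) x).add_const u
    have h3 := (hg' (x + u)).comp x h2
    simp only [ContinuousLinearMap.comp_id] at h3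
    exact h3
  have key : HasFDerivAt (fun x => ∫ u, gauss Cv mv 0 u * g (x + u))
      (∫ u, gauss Cv mv 0 u • fderiv ℝ g (x₀ + u)) x₀ := by
    apply hasFDerivAt_integral_param _ (fun x u => gauss Cv mv 0 u • fderiv ℝ g (x + u)) x₀
      (tsupport g + -(Metric.closedBall x₀ 1)) hK
    · exact ((continuous_gauss Cv mv 0).comp continuous_snd).mul
        ((hg.continuous).comp (continuous_fst.add continuous_snd))
    · exact ((continuous_gauss Cv mv 0).comp continuous_snd).smul
        ((hg.continuous_fderiv one_ne_zero).comp (continuous_fst.add continuous_snd))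
    · intro u x
      simpa using (hdg u x).const_mul (gauss Cv mv 0 u)
    · intro x hx u hu
      have : x + u ∉ tsupport g := fun h => hu (hmem x hx u h)
      rw [image_eq_zero_of_notMem_tsupport this, mul_zero]
    · intro x hx u hu
      have hnm : x + u ∉ tsupport g := fun h => hu (hmem x hx u h)
      have : fderiv ℝ g (x + u) = 0 := by
        by_contra hne
        exact hnm (support_fderiv_subset ℝ (Function.mem_support.mpr hne))
      rw [this, smul_zero]
  have hintc : Integrable fun u => gauss Cv mv 0 u • fderiv ℝ g (x₀ + u) := by
    apply Continuous.integrable_of_hasCompactSupport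
    · exact (continuous_gauss Cv mv 0).smul
        ((hg.continuous_fderiv one_ne_zero).comp (continuous_const.add continuous_id))
    · have h1 : HasCompactSupport fun u => fderiv ℝ g (x₀ + u) := by
        refine HasCompactSupport.intro (K := tsupport (fderiv ℝ g) + ({-x₀} : Set (Fin d → ℝ)))
          (IsCompact.add (hgc.fderiv ℝ) isCompact_singleton) (fun u hu => ?_)
        by_contra hne
        refine hu ?_
        have huu : u = (x₀ + u) + -x₀ := by abel
        rw [huu]
        exact Set.add_mem_add (subset_tsupport _ (Function.mem_support.mpr hne)) rfl
      refine HasCompactSupport.intro h1 fun u hu => ?_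
      rw [image_eq_zero_of_notMem_tsupport hu, smul_zero]
  rw [pd, hrep g, key.fderiv, ContinuousLinearMap.integral_apply hintc, hrep (pd i g)]
  congr 1


/-- for `f ∈ C²₀(ℝ^d)`,
`∫ Γ₀(t,x;s,ξ) 𝒜ⁿ_ξ f(ξ) dξ = 𝒢ˣₙ(t,s) ∫ Γ₀(t,x;s,ξ) f(ξ) dξ`. -/
theorem integral_Aop_eq_Gop_integral {d : ℕ} (t s : ℝ) (hts : t < s)
    (Cv : Matrix (Fin d) (Fin d) ℝ) (hCv : Cv.PosDef) (mv : Fin d → ℝ)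
    (a₀ : MvPolynomial (Fin d) ℝ) (a₁ : Fin d → MvPolynomial (Fin d) ℝ)
    (a₂ : Fin d → Fin d → MvPolynomial (Fin d) ℝ)
    (f : (Fin d → ℝ) → ℝ) (hf : ContDiff ℝ 2 f) (hfc : HasCompactSupport f)
    (x : Fin d → ℝ) :
    ∫ ξ : Fin d → ℝ, gauss Cv mv x ξ * Aop a₀ a₁ a₂ f ξ =
      Gop Cv mv a₀ a₁ a₂ (fun x' => ∫ ξ : Fin d → ℝ, gauss Cv mv x' ξ * f ξ) x := by
  have hf1 : ContDiff ℝ 1 f := hf.of_le one_le_two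
  have hI0 : Integrable fun ξ => gauss Cv mv x ξ * (MvPolynomial.eval ξ a₀ * f ξ) :=
    integrable_gauss_mul Cv mv _ ((MvPolynomial.continuous_eval a₀).mul hf.continuous)
      hfc.mul_left x
  have hI1 : ∀ i, Integrable fun ξ =>
      gauss Cv mv x ξ * (MvPolynomial.eval ξ (a₁ i) * pd i f ξ) := fun i =>
    integrable_gauss_mul Cv mv _ ((MvPolynomial.continuous_eval (a₁ i)).mul (continuous_pd hf1 i))
      (hasCompactSupport_pd f hfc i).mul_left x
  have hI2 : ∀ i j, Integrable fun ξ =>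
      gauss Cv mv x ξ * (MvPolynomial.eval ξ (a₂ i j) * pd i (pd j f) ξ) := fun i j =>
    integrable_gauss_mul Cv mv _
      ((MvPolynomial.continuous_eval (a₂ i j)).mul (continuous_pd (contDiff_pd hf j) i))
      (hasCompactSupport_pd (pd j f) (hasCompactSupport_pd f hfc j) i).mul_left x
  have hL : (∫ ξ : Fin d → ℝ, gauss Cv mv x ξ * Aop a₀ a₁ a₂ f ξ)
      = (∫ ξ, gauss Cv mv x ξ * (MvPolynomial.eval ξ a₀ * f ξ))
        + (∑ i, ∫ ξ, gauss Cv mv x ξ * (MvPolynomial.eval ξ (a₁ i) * pd i f ξ))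
        + ∑ i, ∑ j, ∫ ξ, gauss Cv mv x ξ * (MvPolynomial.eval ξ (a₂ i j) * pd i (pd j f) ξ) := by
    have hps : (fun ξ => gauss Cv mv x ξ * Aop a₀ a₁ a₂ f ξ)
        = fun ξ => gauss Cv mv x ξ * (MvPolynomial.eval ξ a₀ * f ξ)
          + (∑ i, gauss Cv mv x ξ * (MvPolynomial.eval ξ (a₁ i) * pd i f ξ))
          + ∑ i, ∑ j, gauss Cv mv x ξ * (MvPolynomial.eval ξ (a₂ i j) * pd i (pd j f) ξ) := by
      funext ξ
      simp only [Aop, mul_add, Finset.mul_sum]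
    have hsum1 : (∑ i, ∫ ξ, gauss Cv mv x ξ * (MvPolynomial.eval ξ (a₁ i) * pd i f ξ))
        = ∫ ξ, ∑ i, gauss Cv mv x ξ * (MvPolynomial.eval ξ (a₁ i) * pd i f ξ) :=
      (integral_finset_sum _ fun i _ => hI1 i).symm
    have hsum2 : (∑ i, ∑ j, ∫ ξ, gauss Cv mv x ξ
          * (MvPolynomial.eval ξ (a₂ i j) * pd i (pd j f) ξ))
        = ∫ ξ, ∑ i, ∑ j, gauss Cv mv x ξ
          * (MvPolynomial.eval ξ (a₂ i j) * pd i (pd j f) ξ) :=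
      calc (∑ i, ∑ j, ∫ ξ, gauss Cv mv x ξ
            * (MvPolynomial.eval ξ (a₂ i j) * pd i (pd j f) ξ))
          = ∑ i, ∫ ξ, ∑ j, gauss Cv mv x ξ
            * (MvPolynomial.eval ξ (a₂ i j) * pd i (pd j f) ξ) :=
          Finset.sum_congr rfl fun i _ => (integral_finset_sum _ fun j _ => hI2 i j).symm
        _ = _ := (integral_finset_sum _ fun i _ =>
            integrable_finset_sum _ fun j _ => hI2 i j).symm
    have hI01 : Integrable (fun ξ => gauss Cv mv x ξ * (MvPolynomial.eval ξ a₀ * f ξ)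
        + ∑ i, gauss Cv mv x ξ * (MvPolynomial.eval ξ (a₁ i) * pd i f ξ)) :=
      hI0.add (integrable_finset_sum _ fun i _ => hI1 i)
    rw [hps, hsum1, hsum2, ← integral_add hI0 (integrable_finset_sum _ fun i _ => hI1 i),
      ← integral_add hI01
        (integrable_finset_sum _ fun i _ => integrable_finset_sum _ fun j _ => hI2 i j)]
  rw [hL]
  have hFf : (fun x' => ∫ ξ : Fin d → ℝ, gauss Cv mv x' ξ * f ξ) = Fint Cv mv f := rfl
  rw [hFf]
  show _ = polyOp Cv mv a₀ (Fint Cv mv f) x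
      + (∑ i, polyOp Cv mv (a₁ i) (pd i (Fint Cv mv f)) x)
      + ∑ i, ∑ j, polyOp Cv mv (a₂ i j) (pd i (pd j (Fint Cv mv f))) x
  congr 1
  · congr 1
    · exact (polyOp_Fint Cv mv hCv a₀ f hf.continuous hfc x).symm
    · refine Finset.sum_congr rfl fun i _ => ?_
      rw [pd_Fint_eq Cv mv f hf1 hfc i,
        polyOp_Fint Cv mv hCv (a₁ i) (pd i f) (continuous_pd hf1 i)
          (hasCompactSupport_pd f hfc i) x]
  · refine Finset.sum_congr rfl fun i _ => Finset.sum_congr rfl fun j _ => ?_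
    rw [pd_Fint_eq Cv mv f hf1 hfc j,
      pd_Fint_eq Cv mv (pd j f) (contDiff_pd hf j) (hasCompactSupport_pd f hfc j) i,
      polyOp_Fint Cv mv hCv (a₂ i j) _ (continuous_pd (contDiff_pd hf j) i)
        (hasCompactSupport_pd (pd j f) (hasCompactSupport_pd f hfc j) i) x]
end
end
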